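/- von Staudt–Clausen theorem: for every even integer k > 0, the number W_k = B_k + \sum_{l \text{ prime}, (l-1) \mid k} 1/l is an integer. -/

import Mathlib

open Finset PowerSeries

/-- `T m n = ∑_{j=0}^m (-1)^j C(m,j) j^n`. -/
def vscT (m n : ℕ) : ℤ := ∑ j ∈ range (m + 1), (-1) ^ j * (m.choose j : ℤ) * (j : ℤ) ^ n

lemma vscT_zero (m : ℕ) : vscT m 0 = if m = 0 then 1 else 0 := by
  simp only [vscT, pow_zero, mul_one]
  exact Int.alternating_sum_range_choose

lemma vscT_zero_left (n : ℕ) : vscT 0 n = (0 : ℤ) ^ n := by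
  simp [vscT]

/-- The key recurrence: `T (r+1) (n+1) = (r+1) * (T (r+1) n - T r n)`. -/
lemma vscT_rec (r n : ℕ) :
    vscT (r + 1) (n + 1) = ((r : ℤ) + 1) * (vscT (r + 1) n - vscT r n) := by
  set D : ℤ := ∑ i ∈ range (r + 1), (-1) ^ i * ((r).choose i : ℤ) * ((i : ℤ) + 1) ^ n with hDdef
  have h1 : vscT (r + 1) n
      = (∑ i ∈ range (r + 1),
          (-1) ^ (i+1) * (((r).choose i : ℤ) + ((r).choose (i+1) : ℤ)) * ((i:ℤ)+1) ^ n)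
        + (0:ℤ)^n := by
    rw [vscT, Finset.sum_range_succ' (fun j => (-1) ^ j * ((r+1).choose j : ℤ) * (j : ℤ) ^ n)]
    congr 1
    all_goals first
      | (apply Finset.sum_congr rfl
         intro i _
         rw [Nat.choose_succ_succ]
         push_cast
         ring)
      | simp
  have h2 : vscT r n
      = (∑ i ∈ range (r + 1), (-1) ^ (i+1) * (((r).choose (i+1) : ℤ)) * ((i:ℤ)+1) ^ n)
        + (0:ℤ)^n := by
    rw [vscT, Finset.sum_range_succ' (fun j => (-1) ^ j * ((r).choose j : ℤ) * (j : ℤ) ^ n),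
      Finset.sum_range_succ]
    simp only [Nat.choose_succ_self, Nat.cast_zero, Nat.choose_zero_right, Nat.cast_one,
      pow_zero, one_mul]
    push_cast
    ring
  have hD : vscT (r + 1) n - vscT r n = -D := by
    rw [h1, h2, hDdef]
    have step : ∀ i ∈ range (r+1),
        (-1:ℤ) ^ (i+1) * (((r).choose i : ℤ) + ((r).choose (i+1) : ℤ)) * ((i:ℤ)+1) ^ n
          - (-1) ^ (i+1) * ((r).choose (i+1) : ℤ) * ((i:ℤ)+1) ^ n
        = -((-1) ^ i * ((r).choose i : ℤ) * ((i : ℤ) + 1) ^ n) := by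
      intro i _
      ring
    calc (∑ i ∈ range (r + 1),
          (-1:ℤ) ^ (i+1) * (((r).choose i : ℤ) + ((r).choose (i+1) : ℤ)) * ((i:ℤ)+1) ^ n)
          + (0:ℤ)^n
        - ((∑ i ∈ range (r + 1), (-1) ^ (i+1) * (((r).choose (i+1) : ℤ)) * ((i:ℤ)+1) ^ n)
          + (0:ℤ)^n)
        = ∑ i ∈ range (r+1),
            ((-1:ℤ) ^ (i+1) * (((r).choose i : ℤ) + ((r).choose (i+1) : ℤ)) * ((i:ℤ)+1) ^ n
            - (-1) ^ (i+1) * ((r).choose (i+1) : ℤ) * ((i:ℤ)+1) ^ n) := by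
          rw [Finset.sum_sub_distrib]; ring
      _ = ∑ i ∈ range (r+1), -((-1:ℤ) ^ i * ((r).choose i : ℤ) * ((i : ℤ) + 1) ^ n) :=
          Finset.sum_congr rfl step
      _ = -∑ i ∈ range (r+1), (-1:ℤ) ^ i * ((r).choose i : ℤ) * ((i : ℤ) + 1) ^ n :=
          by rw [Finset.sum_neg_distrib]
  have hL : vscT (r + 1) (n + 1) = -((r:ℤ) + 1) * D := by
    rw [vscT, Finset.sum_range_succ'
      (fun j => (-1) ^ j * ((r+1).choose j : ℤ) * (j : ℤ) ^ (n+1))]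
    have h0 : ((-1:ℤ) ^ 0 * ((r+1).choose 0 : ℤ) * ((0:ℕ) : ℤ) ^ (n+1)) = 0 := by
      simp
    rw [h0, add_zero, hDdef, neg_mul, Finset.mul_sum, ← Finset.sum_neg_distrib]
    apply Finset.sum_congr rfl
    intro i _
    have hc : ((r+1).choose (i+1) : ℤ) * ((i:ℤ)+1) = ((r:ℤ)+1) * (r.choose i : ℤ) := by
      have := (Nat.add_one_mul_choose_eq r i).symm
      exact_mod_cast congrArg (Nat.cast : ℕ → ℤ) this
    push_cast
    linear_combination ((-1:ℤ)^(i+1) * ((i:ℤ)+1)^n) * hc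
  rw [hL]
  linear_combination (-(r:ℤ)-1) * hD

/-- `T r n = 0` for `r > n`. -/
lemma vscT_eq_zero_of_lt : ∀ n r : ℕ, n < r → vscT r n = 0 := by
  intro n
  induction n with
  | zero => intro r hr; rw [vscT_zero, if_neg (by omega)]
  | succ n ih =>
    intro r hr
    obtain ⟨s, rfl⟩ : ∃ s, r = s + 1 := ⟨r - 1, by omega⟩
    rw [vscT_rec, ih s (by omega), ih (s+1) (by omega)]
    ring

/-- `r! ∣ T r n`. -/
lemma factorial_dvd_vscT : ∀ n r : ℕ, ((r.factorial : ℤ)) ∣ vscT r n := by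
  intro n
  induction n with
  | zero =>
    intro r; rw [vscT_zero]
    rcases eq_or_ne r 0 with h | h
    · simp [h]
    · simp [if_neg h]
  | succ n ih =>
    intro r
    match r with
    | 0 => simp [vscT_zero_left]
    | s + 1 =>
      rw [vscT_rec, mul_sub]
      apply dvd_sub
      · exact Dvd.dvd.mul_left (ih (s+1)) _
      · rw [Nat.factorial_succ]
        push_cast
        exact mul_dvd_mul_left _ (ih s)

/-- telescoping sum -/
lemma vscT_telescope (n : ℕ) :
    ∑ r ∈ range (n + 1), (vscT (r + 1) (n + 1) : ℚ) / ((r : ℚ) + 1)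
      = -(if n = 0 then (1 : ℚ) else 0) := by
  have h : ∀ r ∈ range (n + 1),
      (vscT (r + 1) (n + 1) : ℚ) / ((r : ℚ) + 1)
        = (fun s => (vscT s n : ℚ)) (r + 1) - (fun s => (vscT s n : ℚ)) r := by
    intro r _
    have hr : ((r : ℚ) + 1) ≠ 0 := by positivity
    rw [vscT_rec]
    push_cast
    rw [mul_comm, mul_div_assoc, div_self hr, mul_one]
  rw [Finset.sum_congr rfl h, Finset.sum_range_sub (fun s => (vscT s n : ℚ))]
  rw [vscT_eq_zero_of_lt n (n+1) (by omega), vscT_zero_left]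
  rcases eq_or_ne n 0 with h0 | h0 <;> simp [h0]

lemma vsc_coeff_pow (m n : ℕ) :
    (PowerSeries.coeff (R := ℚ) n) ((exp ℚ - 1) ^ m)
      = ((-1 : ℚ)) ^ m * (vscT m n : ℚ) / (n.factorial : ℚ) := by
  rw [sub_pow (exp ℚ) 1 m, map_sum]
  have hterm : ∀ j ∈ range (m + 1),
      (PowerSeries.coeff (R := ℚ) n) ((-1 : ℚ⟦X⟧) ^ (j + m) * exp ℚ ^ j * 1 ^ (m - j) * (m.choose j : ℚ⟦X⟧))
        = (-1 : ℚ) ^ m * ((-1 : ℚ) ^ j * (m.choose j : ℚ) * (j : ℚ) ^ n) / (n.factorial : ℚ) := by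
    intro j _
    have h1 : ((-1 : ℚ⟦X⟧) ^ (j + m) * exp ℚ ^ j * 1 ^ (m - j) * (m.choose j : ℚ⟦X⟧))
        = PowerSeries.C (R := ℚ) ((-1) ^ (j + m) * (m.choose j : ℚ)) * exp ℚ ^ j := by
      rw [one_pow, map_mul, map_pow, map_neg, map_one, map_natCast]
      ring
    rw [h1, PowerSeries.coeff_C_mul, exp_pow_eq_rescale_exp, PowerSeries.coeff_rescale,
      PowerSeries.coeff_exp]
    have : ((-1 : ℚ)) ^ (j + m) = (-1) ^ m * (-1) ^ j := by
      rw [pow_add]; ring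
    rw [this]
    simp only [Algebra.algebraMap_self, RingHom.id_apply]
    field_simp
  rw [Finset.sum_congr rfl hterm, ← Finset.sum_div, ← Finset.mul_sum]
  congr 1
  rw [vscT]
  push_cast
  ring

noncomputable def vscG : ℚ⟦X⟧ :=
  PowerSeries.mk fun n =>
    (∑ m ∈ range (n + 1), (vscT m n : ℚ) / ((m : ℚ) + 1)) / (n.factorial : ℚ)

lemma vscG_mul : vscG * (exp ℚ - 1) = X := by
  ext n
  rw [PowerSeries.coeff_mul]
  -- replace vscG by the finite polynomial P below in all relevant coefficients
  set P : ℚ⟦X⟧ := ∑ m ∈ range (n + 1),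
      PowerSeries.C (R := ℚ) ((-1) ^ m / ((m : ℚ) + 1)) * (exp ℚ - 1) ^ m with hP
  have hGP : ∀ j, j ≤ n → PowerSeries.coeff (R := ℚ) j vscG = PowerSeries.coeff (R := ℚ) j P := by
    intro j hj
    rw [hP, map_sum]
    have hterm : ∀ m ∈ range (n + 1),
        PowerSeries.coeff (R := ℚ) j (PowerSeries.C (R := ℚ) ((-1) ^ m / ((m : ℚ) + 1)) * (exp ℚ - 1) ^ m)
          = ((vscT m j : ℚ) / ((m : ℚ) + 1)) / (j.factorial : ℚ) := by
      intro m _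
      rw [PowerSeries.coeff_C_mul, vsc_coeff_pow, div_div]
      have h1 : ((-1 : ℚ)) ^ m * ((-1 : ℚ)) ^ m = 1 := by
        rw [← pow_add]
        exact Even.neg_one_pow ⟨m, by ring⟩
      calc ((-1:ℚ)^m / ((m:ℚ)+1)) * ((-1)^m * (vscT m j : ℚ) / (j.factorial : ℚ))
          = ((-1:ℚ)^m * (-1)^m) * ((vscT m j : ℚ) / ((m:ℚ)+1) / (j.factorial : ℚ)) := by
            ring
        _ = _ := by rw [h1, one_mul, div_div]
    rw [Finset.sum_congr rfl hterm, vscG, PowerSeries.coeff_mk, ← Finset.sum_div]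
    congr 1
    rw [Finset.sum_subset (Finset.range_subset_range.2 (by omega) : range (j+1) ⊆ range (n+1))]
    intro m _ hm
    rw [Finset.mem_range, not_lt] at hm
    rw [vscT_eq_zero_of_lt j m (by omega)]
    simp
  have hmain : ∑ p ∈ antidiagonal n,
      PowerSeries.coeff (R := ℚ) p.1 vscG * PowerSeries.coeff (R := ℚ) p.2 (exp ℚ - 1)
      = PowerSeries.coeff (R := ℚ) n (P * (exp ℚ - 1)) := by
    rw [PowerSeries.coeff_mul]
    apply Finset.sum_congr rfl
    intro p hp
    rw [hGP p.1 (Finset.HasAntidiagonal.antidiagonal.fst_le hp)]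
  rw [hmain]
  -- now compute the coefficient of `P * (exp ℚ - 1)`
  have hPu : PowerSeries.coeff (R := ℚ) n (P * (exp ℚ - 1)) = PowerSeries.coeff (R := ℚ) n X := by
    rw [hP, Finset.sum_mul]
    have hterm : ∀ m ∈ range (n + 1),
        PowerSeries.coeff (R := ℚ) n
            (PowerSeries.C (R := ℚ) ((-1) ^ m / ((m : ℚ) + 1)) * (exp ℚ - 1) ^ m * (exp ℚ - 1))
          = -((vscT (m+1) n : ℚ) / ((m : ℚ) + 1)) / (n.factorial : ℚ) := by
      intro m _
      rw [mul_assoc, ← pow_succ, PowerSeries.coeff_C_mul, vsc_coeff_pow]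
      have h1 : ((-1 : ℚ)) ^ m * ((-1 : ℚ)) ^ (m + 1) = -1 := by
        rw [← pow_add]
        have : Odd (m + (m + 1)) := ⟨m, by ring⟩
        exact this.neg_one_pow
      calc ((-1:ℚ)^m / ((m:ℚ)+1)) * ((-1)^(m+1) * (vscT (m+1) n : ℚ) / (n.factorial : ℚ))
          = ((-1:ℚ)^m * (-1)^(m+1))
              * ((vscT (m+1) n : ℚ) / ((m:ℚ)+1) / (n.factorial : ℚ)) := by ring
        _ = _ := by rw [h1]; ring
    rw [map_sum, Finset.sum_congr rfl hterm]
    rcases Nat.eq_zero_or_pos n with rfl | hn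
    · simp [vscT_zero]
    · obtain ⟨n', rfl⟩ : ∃ n', n = n' + 1 := ⟨n - 1, by omega⟩
      rw [Finset.sum_range_succ, vscT_eq_zero_of_lt (n'+1) (n'+1+1) (by omega)]
      simp only [Int.cast_zero, zero_div, neg_zero, add_zero]
      have := vscT_telescope n'
      have hsum : (∑ m ∈ range (n' + 1),
          -((vscT (m+1) (n'+1) : ℚ) / ((m : ℚ) + 1)) / (((n'+1).factorial : ℚ))) =
          -(∑ r ∈ range (n' + 1), (vscT (r + 1) (n' + 1) : ℚ) / ((r : ℚ) + 1))
            / (((n'+1).factorial : ℚ)) := by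
        rw [← Finset.sum_div, Finset.sum_neg_distrib]
      rw [hsum, this, PowerSeries.coeff_X]
      rcases eq_or_ne n' 0 with rfl | h0
      · norm_num
      · rw [if_neg h0, if_neg (by omega)]
        simp
  rw [hPu]

lemma bernoulli_eq_vscT_sum (n : ℕ) :
    bernoulli n = ∑ m ∈ range (n + 1), (vscT m n : ℚ) / ((m : ℚ) + 1) := by
  have hu : (exp ℚ - 1 : ℚ⟦X⟧) ≠ 0 := by
    intro h
    have := congrArg (PowerSeries.coeff (R := ℚ) 1) h
    simp [PowerSeries.coeff_exp, PowerSeries.coeff_one] at this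
  have hG : vscG = bernoulliPowerSeries ℚ :=
    mul_right_cancel₀ hu (by rw [vscG_mul, bernoulliPowerSeries_mul_exp_sub_one])
  have := congrArg (PowerSeries.coeff (R := ℚ) n) hG
  rw [vscG, PowerSeries.coeff_mk, bernoulliPowerSeries, PowerSeries.coeff_mk] at this
  have hf : (n.factorial : ℚ) ≠ 0 := by
    exact_mod_cast Nat.factorial_ne_zero n
  simp only [Algebra.algebraMap_self, RingHom.id_apply] at this
  rw [div_eq_div_iff hf hf] at this
  exact (mul_right_cancel₀ hf this).symm

/-- `C(m,j) ≡ (-1)^j mod (m+1)` when `m+1` is prime. -/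
lemma choose_mod_prime {m : ℕ} (hp : (m + 1).Prime) :
    ∀ j, j ≤ m → ((m.choose j : ZMod (m + 1)) = (-1) ^ j) := by
  intro j
  induction j with
  | zero => intro _; simp
  | succ j ih =>
    intro hj
    have h1 : ((m + 1).choose (j + 1) : ZMod (m + 1)) = 0 := by
      rw [ZMod.natCast_eq_zero_iff]
      exact hp.dvd_choose_self (Nat.succ_ne_zero j) (by omega)
    rw [Nat.choose_succ_succ] at h1
    push_cast at h1
    rw [ih (by omega)] at h1
    have : ((m.choose (j + 1) : ZMod (m + 1))) = -(-1) ^ j := by linear_combination h1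
    rw [this, pow_succ]
    ring

/-- Sum of `j^k` over `j < p`, mod a prime `p = m+1`. -/
lemma sum_pow_mod_prime {m k : ℕ} (hp : (m + 1).Prime) (hk0 : 0 < k) :
    (∑ j ∈ range (m + 1), ((j : ZMod (m + 1))) ^ k)
      = if m ∣ k then -1 else 0 := by
  haveI : Fact (m + 1).Prime := ⟨hp⟩
  have h1 : (∑ j ∈ range (m + 1), ((j : ZMod (m + 1)))^ k)
      = ∑ x : ZMod (m + 1), x ^ k := by
    exact Finset.sum_nbij' (fun j => ((j : ZMod (m+1)))) (fun x => x.val)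
      (fun a _ => Finset.mem_univ _) (fun x _ => Finset.mem_range.2 (ZMod.val_lt x))
      (fun a ha => ZMod.val_cast_of_lt (Finset.mem_range.1 ha))
      (fun x _ => ZMod.natCast_rightInverse x) (fun a _ => rfl)
  rw [h1]
  classical
  let φ : (ZMod (m+1))ˣ ↪ ZMod (m+1) := ⟨fun x ↦ x, Units.val_injective⟩
  have hmap : Finset.univ.map φ = Finset.univ \ {0} := by
    ext x
    simpa only [Finset.mem_map, Finset.mem_univ, Function.Embedding.coeFn_mk, true_and,
      Finset.mem_sdiff, Finset.mem_singleton, φ] using (show (∃ a : (ZMod (m+1))ˣ, (a : ZMod (m+1)) = x) ↔ x ≠ 0 from isUnit_iff_ne_zero)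
  have h2 : (∑ x : ZMod (m + 1), x ^ k) = ∑ x : (ZMod (m + 1))ˣ, ((x : ZMod (m+1))) ^ k := by
    calc ∑ x : ZMod (m+1), x ^ k
        = ∑ x ∈ Finset.univ \ {(0 : ZMod (m+1))}, x ^ k := by
          rw [← Finset.sum_sdiff (Finset.subset_univ {(0 : ZMod (m+1))}),
            Finset.sum_singleton, zero_pow hk0.ne', add_zero]
      _ = ∑ x : (ZMod (m + 1))ˣ, ((x : ZMod (m+1))) ^ k := by
          rw [← hmap, Finset.sum_map]
          rfl
  rw [h2]
  have h3 := FiniteField.sum_pow_units (ZMod (m+1)) k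
  have hcard : Fintype.card (ZMod (m+1)) = m + 1 := ZMod.card _
  rw [hcard] at h3
  simpa using h3

/-- Prime case: `vscT m k ≡ (-1 or 0) mod (m+1)`. -/
lemma vscT_mod_prime {m k : ℕ} (hp : (m + 1).Prime) (hk0 : 0 < k) :
    ((vscT m k : ZMod (m + 1))) = if m ∣ k then -1 else 0 := by
  have h1 : ((vscT m k : ZMod (m + 1)))
      = ∑ j ∈ range (m + 1), ((j : ZMod (m + 1))) ^ k := by
    rw [vscT]
    push_cast
    apply Finset.sum_congr rfl
    intro j hj
    have hj' := Finset.mem_range.1 hj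
    rw [choose_mod_prime hp j (by omega : j ≤ m)]
    have : ((-1 : ZMod (m+1)) ^ j * (-1) ^ j) = 1 := by
      rw [← pow_add]
      exact Even.neg_one_pow ⟨j, by ring⟩
    linear_combination ((j : ZMod (m+1)))^k * this
  rw [h1, sum_pow_mod_prime hp hk0]

lemma mul_dvd_factorial_of_lt {a b : ℕ} (h2 : 1 ≤ a) (hab : a < b) : a * b ∣ b.factorial := by
  have h1 : b.factorial = b * (b - 1).factorial := by
    rw [← Nat.succ_pred_eq_of_pos (by omega : 0 < b), Nat.factorial_succ]
    congr 1 <;> omega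
  have h2' : a ∣ (b - 1).factorial := Nat.dvd_factorial (by omega) (by omega)
  calc a * b = b * a := by ring
    _ ∣ b * (b - 1).factorial := mul_dvd_mul_left _ h2'
    _ = b.factorial := h1.symm

/-- Composite case: `n ∣ (n-1)!` when `n` is composite and not 4. -/
lemma composite_dvd_factorial {n : ℕ} (h2 : 2 ≤ n) (hnp : ¬ n.Prime) (h4 : n ≠ 4) :
    n ∣ (n - 1).factorial := by
  obtain ⟨a, ha, ha2, halt⟩ := Nat.exists_dvd_of_not_prime2 h2 hnp
  obtain ⟨b, rfl⟩ := ha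
  have hb2 : 2 ≤ b := by
    by_contra hb
    interval_cases b <;> omega
  have hblt : b < a * b := by nlinarith
  have halt' : a < a * b := by nlinarith
  rcases Nat.lt_trichotomy a b with h | h | h
  · exact (mul_dvd_factorial_of_lt (by omega) h).trans
      (Nat.factorial_dvd_factorial (by omega))
  · -- a = b, so n = a^2 with a ≥ 3
    subst h
    have ha3 : 3 ≤ a := by
      rcases Nat.lt_or_ge a 3 with h | h
      · interval_cases a <;> omega
      · exact h
    have key : a * a ∣ (2 * a).factorial := by
      have h1 : (2 * a).factorial = (2 * a) * (2 * a - 1).factorial := by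
        rw [← Nat.succ_pred_eq_of_pos (by omega : 0 < 2 * a), Nat.factorial_succ]
        congr 1 <;> omega
      have hd : a ∣ (2 * a - 1).factorial :=
        Nat.dvd_factorial (by omega) (by omega)
      calc a * a ∣ (2 * a) * a := ⟨2, by ring⟩
        _ ∣ (2 * a) * (2 * a - 1).factorial := mul_dvd_mul_left _ hd
        _ = (2 * a).factorial := h1.symm
    have h2a : 2 * a + 1 ≤ a * a := by nlinarith
    exact key.trans (Nat.factorial_dvd_factorial (by omega))
  · have : b * a ∣ a.factorial := mul_dvd_factorial_of_lt (by omega) h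
    exact (show a * b ∣ a.factorial by rwa [mul_comm]).trans
      (Nat.factorial_dvd_factorial (by omega))

/-- The `m+1 = 4` case. -/
lemma vscT_four {k : ℕ} (hk : Even k) (hk0 : 0 < k) : (4 : ℤ) ∣ vscT 3 k := by
  have hT : vscT 3 k = -3 + 3 * 2 ^ k - 3 ^ k := by
    rw [vscT]
    rw [Finset.sum_range_succ, Finset.sum_range_succ, Finset.sum_range_succ,
      Finset.sum_range_succ, Finset.range_zero, Finset.sum_empty]
    norm_num [zero_pow hk0.ne']
    ring
  obtain ⟨t, rfl⟩ := hk
  have ht : t ≠ 0 := by omega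
  have h1 : ((vscT 3 (t + t) : ZMod 4)) = 0 := by
    rw [hT]
    push_cast
    have h2 : ((2 : ZMod 4)) ^ (t + t) = 0 := by
      rw [pow_add, ← mul_pow]
      have h4 : ((2 : ZMod 4)) * 2 = 0 := by decide
      rw [h4, zero_pow ht]
    have h3 : ((3 : ZMod 4)) ^ (t + t) = 1 := by
      rw [pow_add, ← mul_pow]
      have h4 : ((3 : ZMod 4)) * 3 = 1 := by decide
      rw [h4, one_pow]
    rw [h2, h3]
    decide
  rwa [ZMod.intCast_zmod_eq_zero_iff_dvd] at h1

/-- Main divisibility: `(m+1) ∣ T m k + ε_m`. -/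
lemma vsc_key {k : ℕ} (hk : Even k) (hk0 : 0 < k) (m : ℕ) :
    ((m : ℤ) + 1) ∣ vscT m k + (if (m + 1).Prime ∧ m ∣ k then 1 else 0) := by
  classical
  by_cases hp : (m + 1).Prime
  · have h := vscT_mod_prime hp hk0
    by_cases hd : m ∣ k
    · rw [if_pos ⟨hp, hd⟩]
      rw [if_pos hd] at h
      have : ((vscT m k + 1 : ℤ) : ZMod (m + 1)) = 0 := by
        push_cast
        rw [h]
        ring
      have h2 := (ZMod.intCast_zmod_eq_zero_iff_dvd _ _).1 this
      exact_mod_cast h2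
    · rw [if_neg (by tauto), add_zero]
      rw [if_neg hd] at h
      have : ((vscT m k : ℤ) : ZMod (m + 1)) = 0 := by exact_mod_cast h
      have h2 := (ZMod.intCast_zmod_eq_zero_iff_dvd _ _).1 this
      exact_mod_cast h2
  · rw [if_neg (by tauto), add_zero]
    rcases Nat.eq_zero_or_pos m with rfl | hm
    · simp
    rcases eq_or_ne m 3 with rfl | hm3
    · exact_mod_cast vscT_four hk hk0
    · have hdvd : (m + 1) ∣ m.factorial := by
        have := composite_dvd_factorial (n := m + 1) (by omega) hp (by omega)
        simpa using this
      have : ((m : ℤ) + 1) ∣ (m.factorial : ℤ) := by exact_mod_cast hdvd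
      exact this.trans (factorial_dvd_vscT k m)

/-- von Staudt–Clausen: for every even `k > 0`,
`W_k = B_k + ∑_{l prime, (l-1) ∣ k} 1/l` is an integer.  (Every prime `l` with
`l - 1 ∣ k` satisfies `l ≤ k + 1`, so the sum over `Finset.range (k+2)` captures
all of them.) -/
theorem vonStaudt_Clausen (k : ℕ) (hk : Even k) (hk0 : 0 < k) :
    ∃ z : ℤ,
      bernoulli k +
        ∑ l ∈ (Finset.range (k + 2)).filter (fun l => l.Prime ∧ (l - 1) ∣ k),
          (1 : ℚ) / l = (z : ℚ) := by
  classical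
  -- reindex the prime sum
  have hreindex :
      (∑ l ∈ (Finset.range (k + 2)).filter (fun l => l.Prime ∧ (l - 1) ∣ k), (1 : ℚ) / l)
        = ∑ m ∈ (Finset.range (k + 1)).filter (fun m => (m + 1).Prime ∧ m ∣ k),
            (1 : ℚ) / ((m : ℚ) + 1) := by
    apply Finset.sum_nbij' (fun l => l - 1) (fun m => m + 1)
    · intro l hl
      rw [Finset.mem_filter, Finset.mem_range] at hl ⊢
      obtain ⟨hlr, hlp, hld⟩ := hl
      have h2 := hlp.two_le
      have hle : l - 1 ≤ k := Nat.le_of_dvd hk0 hld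
      refine ⟨by omega, ?_, hld⟩
      have : l - 1 + 1 = l := by omega
      rw [this]
      exact hlp
    · intro m hm
      rw [Finset.mem_filter, Finset.mem_range] at hm ⊢
      obtain ⟨hmr, hmp, hmd⟩ := hm
      exact ⟨by omega, hmp, by simpa using hmd⟩
    · intro l hl
      rw [Finset.mem_filter] at hl
      have := hl.2.1.two_le
      omega
    · intro m _
      omega
    · intro l hl
      rw [Finset.mem_filter] at hl
      have h2 := hl.2.1.two_le
      have : ((l - 1 : ℕ) : ℚ) + 1 = (l : ℚ) := by
        rw [Nat.cast_sub (by omega : 1 ≤ l)]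
        ring
      rw [this]
  rw [hreindex, bernoulli_eq_vscT_sum k, Finset.sum_filter, ← Finset.sum_add_distrib]
  refine ⟨∑ m ∈ range (k + 1),
      (vscT m k + (if (m + 1).Prime ∧ m ∣ k then 1 else 0)) / ((m : ℤ) + 1), ?_⟩
  push_cast [Int.cast_sum]
  apply Finset.sum_congr rfl
  intro m _
  have hdvd := vsc_key hk hk0 m
  have hcast := Int.cast_div_charZero (k := ℚ) hdvd
  rw [hcast]
  push_cast
  split_ifs <;> ring
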